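/- Let j ≤ k be positive integers with k even and k ≥ 2. Then for all a ∈ [1/2, 1), w^{ub}(a) ≤ w^{ub}(1-a). -/

import Mathlib

/-- Binary entropy function with natural logarithms (`Real.log 0 = 0` gives `H 0 = H 1 = 0`). -/
noncomputable def H (a : ℝ) : ℝ := -a * Real.log a - (1 - a) * Real.log (1 - a)

/-- Asymptotic growth rate of the average weight distribution of Gallager's
`(n, j, k)` LDPC ensemble. -/
noncomputable def wo (j k : ℕ) (a : ℝ) : ℝ :=
  ((j : ℝ) / k) *
    sInf {y : ℝ | ∃ x : ℝ, 0 < x ∧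
      y = Real.log (((1 + x) ^ k + (1 - x) ^ k) / (2 * x ^ (a * (k : ℝ))))} -
  ((j : ℝ) - 1) * H a

/-- Upper bound on the asymptotic growth rate of the average weight distribution of the
LDPC-GM ensemble (outer Gallager `(n, j, k)` LDPC code, inner rate-1 `(k, k)` regular
LDGM code). -/
noncomputable def wub (j k : ℕ) (a : ℝ) : ℝ :=
  H a + sSup {y : ℝ | ∃ b : ℝ, b ∈ Set.Icc (a / k) (1 - a / k) ∧
    y = wo j k b + a * Real.log (1 - (1 - 2 * b) ^ k)
        + (1 - a) * Real.log (1 + (1 - 2 * b) ^ k) - Real.log 2}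

lemma H_nonneg' {b : ℝ} (h0 : 0 ≤ b) (h1 : b ≤ 1) : 0 ≤ H b := by
  have h2 : Real.log b ≤ 0 := Real.log_nonpos h0 h1
  have h3 : Real.log (1 - b) ≤ 0 := Real.log_nonpos (by linarith) (by linarith)
  have := mul_nonpos_of_nonneg_of_nonpos h0 h2
  have := mul_nonpos_of_nonneg_of_nonpos (by linarith : (0:ℝ) ≤ 1 - b) h3
  unfold H; nlinarith

lemma wo_le (j k : ℕ) (hj : 1 ≤ j) (hk : 0 < k) {b : ℝ} (h0 : 0 ≤ b) (h1 : b ≤ 1) :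
    wo j k b ≤ ((j : ℝ) / k) * Real.log ((2 : ℝ) ^ k / 2) := by
  unfold wo
  set T : Set ℝ := {y : ℝ | ∃ x : ℝ, 0 < x ∧
      y = Real.log (((1 + x) ^ k + (1 - x) ^ k) / (2 * x ^ (b * (k : ℝ))))} with hT
  have hmem : Real.log ((2 : ℝ) ^ k / 2) ∈ T := by
    refine ⟨1, one_pos, ?_⟩
    rw [Real.one_rpow]
    norm_num
    rw [zero_pow hk.ne']
    norm_num
  have hL0 : 0 ≤ Real.log ((2 : ℝ) ^ k / 2) := by
    apply Real.log_nonneg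
    rw [le_div_iff₀ (by norm_num)]
    calc (1 : ℝ) * 2 = 2 ^ 1 := by norm_num
    _ ≤ 2 ^ k := pow_le_pow_right₀ (by norm_num) hk
  have hinf : sInf T ≤ Real.log ((2 : ℝ) ^ k / 2) := by
    by_cases hb : BddBelow T
    · exact csInf_le hb hmem
    · rw [Real.sInf_of_not_bddBelow hb]; exact hL0
  have hjk : (0 : ℝ) ≤ (j : ℝ) / k := by positivity
  have h2 : ((j : ℝ) / k) * sInf T ≤ ((j : ℝ) / k) * Real.log ((2 : ℝ) ^ k / 2) :=
    mul_le_mul_of_nonneg_left hinf hjk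
  have hH : 0 ≤ H b := H_nonneg' h0 h1
  have hj1 : (0 : ℝ) ≤ (j : ℝ) - 1 := by
    have : (1 : ℝ) ≤ (j : ℝ) := by exact_mod_cast hj
    linarith
  nlinarith [mul_nonneg hj1 hH]

theorem stmt2 (j k : ℕ) (hj : 0 < j) (hjk : j ≤ k) (hke : Even k) (hk2 : 2 ≤ k)
    (a : ℝ) (ha : a ∈ Set.Ico (1 / 2 : ℝ) 1) :
    wub j k a ≤ wub j k (1 - a) := by
  obtain ⟨ha1, ha2⟩ := ha
  have hk0 : 0 < k := by omega
  have hkR : (2 : ℝ) ≤ (k : ℝ) := by exact_mod_cast hk2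
  have hkpos : (0 : ℝ) < (k : ℝ) := by linarith
  have hH : H a = H (1 - a) := by
    have h1 : (1 : ℝ) - (1 - a) = a := by ring
    unfold H; rw [h1]; ring
  have he : (1 : ℝ) - (1 - a) = a := by ring
  unfold wub
  rw [hH, he]
  apply add_le_add (le_refl _)
  set S1 : Set ℝ := {y : ℝ | ∃ b : ℝ, b ∈ Set.Icc (a / k) (1 - a / k) ∧
    y = wo j k b + a * Real.log (1 - (1 - 2 * b) ^ k)
        + (1 - a) * Real.log (1 + (1 - 2 * b) ^ k) - Real.log 2} with hS1
  set S2 : Set ℝ := {y : ℝ | ∃ b : ℝ, b ∈ Set.Icc ((1 - a) / k) (1 - (1 - a) / k) ∧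
    y = wo j k b + (1 - a) * Real.log (1 - (1 - 2 * b) ^ k)
        + a * Real.log (1 + (1 - 2 * b) ^ k) - Real.log 2} with hS2
  -- S1 is nonempty
  have hak : a / k ≤ 1 - a / k := by
    have : a / k ≤ a / 2 := by
      apply div_le_div_of_nonneg_left (by linarith) (by norm_num) hkR
    have : a / 2 < 1 / 2 := by linarith
    linarith
  have hne : S1.Nonempty := by
    refine ⟨_, ⟨a / k, ⟨le_refl _, hak⟩, rfl⟩⟩
  -- S2 is bounded above by C
  set C : ℝ := ((j : ℝ) / k) * Real.log ((2 : ℝ) ^ k / 2) with hC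
  have hbound : ∀ y ∈ S2, y ≤ C := by
    rintro y ⟨b, ⟨hb1, hb2⟩, rfl⟩
    have hb0 : 0 ≤ b := le_trans (div_nonneg (by linarith) (by linarith)) hb1
    have hb1' : b ≤ 1 := by
      have : 0 ≤ (1 - a) / k := div_nonneg (by linarith) (by linarith)
      linarith
    set t : ℝ := (1 - 2 * b) ^ k with ht
    have ht0 : 0 ≤ t := hke.pow_nonneg _
    have ht1 : t ≤ 1 := by
      calc t = |t| := (abs_of_nonneg ht0).symm
      _ = |1 - 2 * b| ^ k := by rw [ht, abs_pow]
      _ ≤ 1 ^ k := pow_le_pow_left₀ (abs_nonneg _) (abs_le.mpr ⟨by linarith, by linarith⟩) k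
      _ = 1 := one_pow k
    have h1 : (1 - a) * Real.log (1 - t) ≤ 0 :=
      mul_nonpos_of_nonneg_of_nonpos (by linarith) (Real.log_nonpos (by linarith) (by linarith))
    have h2 : a * Real.log (1 + t) ≤ Real.log 2 := by
      have hl1 : Real.log (1 + t) ≤ Real.log 2 := Real.log_le_log (by linarith) (by linarith)
      have hl0 : 0 ≤ Real.log (1 + t) := Real.log_nonneg (by linarith)
      nlinarith
    have h3 : wo j k b ≤ C := wo_le j k hj hk0 hb0 hb1'
    linarith
  have hbdd : BddAbove S2 := ⟨C, hbound⟩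
  -- compare
  apply csSup_le hne
  rintro x ⟨b, ⟨hb1, hb2⟩, rfl⟩
  have hb0 : 0 ≤ b := le_trans (by positivity) hb1
  have hb1' : b ≤ 1 := by
    have : 0 ≤ a / k := by positivity
    linarith
  have hbmem : b ∈ Set.Icc ((1 - a) / k) (1 - (1 - a) / k) := by
    constructor
    · refine le_trans ?_ hb1
      apply div_le_div_of_nonneg_right (by linarith) hkpos.le
    · refine le_trans hb2 ?_
      have : (1 - a) / k ≤ a / k := div_le_div_of_nonneg_right (by linarith) hkpos.le
      linarith
  have hmem2 : wo j k b + (1 - a) * Real.log (1 - (1 - 2 * b) ^ k)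
        + a * Real.log (1 + (1 - 2 * b) ^ k) - Real.log 2 ∈ S2 := ⟨b, hbmem, rfl⟩
  refine le_trans ?_ (le_csSup hbdd hmem2)
  set t : ℝ := (1 - 2 * b) ^ k with ht
  have ht0 : 0 ≤ t := hke.pow_nonneg _
  have ht1 : t ≤ 1 := by
    calc t = |t| := (abs_of_nonneg ht0).symm
    _ = |1 - 2 * b| ^ k := by rw [ht, abs_pow]
    _ ≤ 1 ^ k := pow_le_pow_left₀ (abs_nonneg _) (abs_le.mpr ⟨by linarith, by linarith⟩) k
    _ = 1 := one_pow k
  have hlog : Real.log (1 - t) ≤ Real.log (1 + t) :=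
    le_trans (Real.log_nonpos (by linarith) (by linarith)) (Real.log_nonneg (by linarith))
  nlinarith [mul_nonneg (by linarith : (0:ℝ) ≤ 2 * a - 1) (sub_nonneg.mpr hlog)]
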